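/- For all (w₁,w₂,w₃) ∈ ℂ³, 𝒫(w₁,w₂,w₃) ≥ 0. -/

import Mathlib

/-- The effective potential `𝒫` of the SO(5) spherically symmetric EYM model. -/
noncomputable def Pot (w₁ w₂ w₃ : ℂ) : ℝ :=
  (1 - Complex.normSq w₁) ^ 2 / 2 + (1 - Complex.normSq w₃) ^ 2 / 2
    + Complex.normSq w₂ *
        (Complex.normSq w₁ + Complex.normSq w₃ + Complex.normSq w₂ / 4 - 1)
    - (w₂ ^ 2 * (starRingEnd ℂ) (w₁ * w₃)).re

/-- The effective potential is nonnegative on all of ℂ³. -/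
theorem pot_nonneg (w₁ w₂ w₃ : ℂ) : 0 ≤ Pot w₁ w₂ w₃ := by
  set a := Complex.normSq w₁ with ha
  set b := Complex.normSq w₂ with hb
  set c := Complex.normSq w₃ with hc
  set q := ‖w₁ * w₃‖ with hq
  set r := (w₂ ^ 2 * (starRingEnd ℂ) (w₁ * w₃)).re with hr
  have ha0 : 0 ≤ a := Complex.normSq_nonneg _
  have hb0 : 0 ≤ b := Complex.normSq_nonneg _
  have hc0 : 0 ≤ c := Complex.normSq_nonneg _
  have hq0 : 0 ≤ q := norm_nonneg _
  have hq2 : q ^ 2 = a * c := by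
    rw [hq, ha, hc, Complex.sq_norm, Complex.normSq_mul]
  have hrq : r ≤ b * q := by
    calc r ≤ ‖w₂ ^ 2 * (starRingEnd ℂ) (w₁ * w₃)‖ := Complex.re_le_norm _
      _ = b * q := by
        rw [norm_mul, Complex.norm_conj, norm_pow, Complex.sq_norm, ← hq, hb]
  have hqac : 2 * q ≤ a + c := by nlinarith [sq_nonneg (a - c), sq_nonneg (a + c - 2 * q)]
  have hP : Pot w₁ w₂ w₃ = (1 - a) ^ 2 / 2 + (1 - c) ^ 2 / 2
      + b * (a + c + b / 4 - 1) - r := rfl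
  rw [hP]
  nlinarith [sq_nonneg (1 - b / 2 - (a + c) / 2), sq_nonneg (a - c),
    mul_nonneg hb0 (by linarith : (0:ℝ) ≤ a + c - 2 * q), sub_nonneg.mpr hrq]
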